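/- If λ covers μ in the dominance order on partitions of n, then the length (number of nonzero parts) of λ equals the length of μ or the length of μ minus one. -/

import Mathlib

/-- The parts of a partition sorted in weakly decreasing order. -/
def partsList {n : ℕ} (p : Nat.Partition n) : List ℕ := p.parts.sort (· ≥ ·)

/-- The `i`-th part (1-indexed) of a partition, with the convention that
`part p i = 0` for `i` beyond the length. -/
def part {n : ℕ} (p : Nat.Partition n) (i : ℕ) : ℕ := (partsList p).getD (i - 1) 0

/-- The partial sum `λ₁ + ⋯ + λ_j`. -/
def psum {n : ℕ} (p : Nat.Partition n) (j : ℕ) : ℕ := ∑ i ∈ Finset.range j, part p (i + 1)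

/-- Dominance ordering: `Dominates l m` means `l ≥ m`, i.e. every partial sum of `l`
is at least the corresponding partial sum of `m`. -/
def Dominates {n : ℕ} (l m : Nat.Partition n) : Prop := ∀ j, psum m j ≤ psum l j

/-- Strict dominance: `l > m`. -/
def SDom {n : ℕ} (l m : Nat.Partition n) : Prop := Dominates l m ∧ l ≠ m

/-- The number of (nonzero) parts of a partition. -/
def plen {n : ℕ} (p : Nat.Partition n) : ℕ := Multiset.card p.parts

/-- `l` covers `m` in the dominance order: `l > m` and nothing strictly in between. -/
def Covers {n : ℕ} (l m : Nat.Partition n) : Prop :=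
  SDom l m ∧ ¬ ∃ ν : Nat.Partition n, SDom l ν ∧ SDom ν m

namespace CoverLengthAux

lemma partsList_sorted {n : ℕ} (p : Nat.Partition n) : (partsList p).Pairwise (· ≥ ·) :=
  Multiset.pairwise_sort _ _

lemma partsList_pos {n : ℕ} (p : Nat.Partition n) : ∀ x ∈ partsList p, 0 < x := by
  intro x hx
  exact p.parts_pos (by rwa [partsList, Multiset.mem_sort] at hx)

lemma partsList_sum {n : ℕ} (p : Nat.Partition n) : (partsList p).sum = n := by
  have h : ((partsList p : Multiset ℕ)).sum = p.parts.sum := by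
    rw [partsList, Multiset.sort_eq]
  rw [Multiset.sum_coe] at h
  rw [h, p.parts_sum]

lemma partsList_length {n : ℕ} (p : Nat.Partition n) : (partsList p).length = plen p := by
  rw [plen, ← Multiset.coe_card, partsList, Multiset.sort_eq]

lemma sum_take_getD (l : List ℕ) (j : ℕ) :
    (l.take j).sum = ∑ i ∈ Finset.range j, l.getD i 0 := by
  induction j with
  | zero => simp
  | succ j ih =>
    rw [Finset.sum_range_succ, ← ih, List.take_succ, List.sum_append,
      List.getD_eq_getElem?_getD]
    cases l[j]? <;> simp

lemma psum_eq {n : ℕ} (p : Nat.Partition n) (j : ℕ) :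
    psum p j = ((partsList p).take j).sum := by
  rw [psum, sum_take_getD]
  apply Finset.sum_congr rfl
  intro i _
  simp [part]

lemma sum_le_length (l : List ℕ) (h : ∀ x ∈ l, x ≤ 1) : l.sum ≤ l.length := by
  induction l with
  | nil => simp
  | cons x xs ih =>
    have h1 := h x (by simp)
    have h2 := ih (fun y hy => h y (by simp [hy]))
    simp only [List.sum_cons, List.length_cons]
    omega

lemma length_le_sum (l : List ℕ) (h : ∀ x ∈ l, 0 < x) : l.length ≤ l.sum := by
  induction l with
  | nil => simp
  | cons x xs ih =>
    have h1 := h x (by simp)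
    have h2 := ih (fun y hy => h y (by simp [hy]))
    simp only [List.sum_cons, List.length_cons]
    omega

lemma psum_le {n : ℕ} (p : Nat.Partition n) (j : ℕ) : psum p j ≤ n := by
  rw [psum_eq]
  have h := List.take_append_drop j (partsList p)
  have h2 : ((partsList p).take j).sum + ((partsList p).drop j).sum = n := by
    rw [← List.sum_append, h, partsList_sum]
  omega

lemma psum_of_plen_le {n : ℕ} (p : Nat.Partition n) {j : ℕ} (h : plen p ≤ j) :
    psum p j = n := by
  rw [psum_eq, List.take_of_length_le (by rw [partsList_length]; exact h), partsList_sum]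

lemma psum_add_le {n : ℕ} (p : Nat.Partition n) {j : ℕ} (h : j ≤ plen p) :
    psum p j + (plen p - j) ≤ n := by
  rw [psum_eq]
  have h1 := List.take_append_drop j (partsList p)
  have h2 : ((partsList p).take j).sum + ((partsList p).drop j).sum = n := by
    rw [← List.sum_append, h1, partsList_sum]
  have h3 : ((partsList p).drop j).length ≤ ((partsList p).drop j).sum :=
    length_le_sum _ (fun x hx => partsList_pos p x (List.mem_of_mem_drop hx))
  have h4 : ((partsList p).drop j).length = plen p - j := by
    rw [List.length_drop, partsList_length]
  omega

lemma plen_le_of_dominates {n : ℕ} {l m : Nat.Partition n} (h : Dominates l m) :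
    plen l ≤ plen m := by
  by_contra hlt
  push_neg at hlt
  have h1 : psum m (plen m) = n := psum_of_plen_le m le_rfl
  have h2 : psum l (plen m) + (plen l - plen m) ≤ n := psum_add_le l (le_of_lt hlt)
  have h3 := h (plen m)
  omega

/-- Build a partition from a list of positive naturals summing to `n`. -/
def ofList (n : ℕ) (l : List ℕ) (hpos : ∀ x ∈ l, 0 < x) (hsum : l.sum = n) :
    Nat.Partition n where
  parts := (l : Multiset ℕ)
  parts_pos := fun hi => hpos _ hi
  parts_sum := by rwa [Multiset.sum_coe]

lemma partsList_ofList (n : ℕ) (l : List ℕ) (hpos : ∀ x ∈ l, 0 < x) (hsum : l.sum = n)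
    (hsort : l.Pairwise (· ≥ ·)) : partsList (ofList n l hpos hsum) = l := by
  refine (fun hp h1 h2 => List.Perm.eq_of_pairwise' (r := (· ≥ ·)) h1 h2 hp) ?_ ?_ ?_
  · exact Multiset.coe_eq_coe.mp (Multiset.sort_eq _ _)
  · exact Multiset.pairwise_sort _ _
  · exact hsort

/-- Partial sums of a list of the form `D ++ a :: B` where `B` is all ones. -/
lemma take_sum_mid (D : List ℕ) (a : ℕ) (B : List ℕ) (hB : ∀ b ∈ B, b = 1) (j : ℕ) :
    ((D ++ a :: B).take j).sum =
      if j ≤ D.length then (D.take j).sum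
      else D.sum + a + min (j - D.length - 1) B.length := by
  have hBrep : B = List.replicate B.length 1 := List.eq_replicate_iff.mpr ⟨rfl, hB⟩
  by_cases hj : j ≤ D.length
  · rw [if_pos hj, List.take_append_of_le_length hj]
  · rw [if_neg hj]
    push_neg at hj
    have hdecomp : j = D.length + (1 + (j - D.length - 1)) := by omega
    conv_lhs => rw [hdecomp, List.take_add, List.take_left' rfl]
    have hdrop : (D ++ a :: B).drop D.length = a :: B := List.drop_left (l₁ := D) (l₂ := a :: B)
    rw [hdrop]
    have htake : (a :: B).take (1 + (j - D.length - 1)) = a :: B.take (j - D.length - 1) := by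
      rw [Nat.add_comm 1, List.take_succ_cons]
    rw [htake, List.sum_append, List.sum_cons]
    have hBt : (B.take (j - D.length - 1)).sum = min (j - D.length - 1) B.length := by
      conv_lhs => rw [hBrep]
      rw [List.take_replicate, List.sum_replicate]
      simp [Nat.min_comm]
    rw [hBt, ← Nat.add_assoc]

end CoverLengthAux

open CoverLengthAux in
/-- If `λ` covers `μ` in the dominance order on partitions of `n`, then the number of
parts of `λ` equals that of `μ` or that of `μ` minus one. -/
theorem cover_length (n : ℕ) (l m : Nat.Partition n) (h : Covers l m) :
    plen l = plen m ∨ plen l + 1 = plen m := by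
  have hdom : Dominates l m := h.1.1
  have hLk : plen l ≤ plen m := plen_le_of_dominates hdom
  by_contra hcon
  push_neg at hcon
  have hk2 : plen l + 2 ≤ plen m := by omega
  set L := plen l with hL
  set k := plen m with hk'
  -- n ≥ k
  have hnk : k ≤ n := by
    have := psum_add_le m (j := 0) (Nat.zero_le _)
    simpa [psum] using this
  -- the sorted list of parts of l
  have hslen : (partsList l).length = L := partsList_length l
  have hssum : (partsList l).sum = n := partsList_sum l
  have hspos : ∀ x ∈ partsList l, 0 < x := partsList_pos l
  have hssort : (partsList l).Pairwise (· ≥ ·) := partsList_sorted l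
  -- there is a part ≥ 2
  have hex : ∃ x ∈ partsList l, 2 ≤ x := by
    by_contra hno
    push_neg at hno
    have : (partsList l).sum ≤ (partsList l).length :=
      sum_le_length _ (fun x hx => by have := hno x hx; omega)
    omega
  obtain ⟨x, hxs, hx2⟩ := hex
  set A := (partsList l).takeWhile (fun y => 2 ≤ y) with hA
  set B := (partsList l).dropWhile (fun y => 2 ≤ y) with hB
  have hAB : A ++ B = partsList l := List.takeWhile_append_dropWhile
  -- B consists of ones
  have hBsorted : B.Pairwise (· ≥ ·) :=
    List.Pairwise.sublist ((List.dropWhile_suffix _).sublist) hssort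
  have hBmem : ∀ b ∈ B, b ∈ partsList l := fun b hb =>
    (List.dropWhile_suffix _).sublist.mem hb
  have hBone : ∀ b ∈ B, b = 1 := by
    intro b hb
    have hbpos : 0 < b := hspos b (hBmem b hb)
    rcases hBeq : B with _ | ⟨b0, B'⟩
    · rw [hBeq] at hb; simp at hb
    · have hhead := List.head?_dropWhile_not (fun y => decide (2 ≤ y)) (partsList l)
      rw [← hB, hBeq] at hhead
      simp only [List.head?_cons] at hhead
      have hb0 : b0 < 2 := by simpa using hhead
      rw [hBeq] at hb
      rcases List.mem_cons.mp hb with rfl | hb'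
      · omega
      · have hsB := hBsorted
        rw [hBeq] at hsB
        have := (List.pairwise_cons.mp hsB).1 b hb'
        omega
  -- x is in A, so A nonempty
  have hxA : x ∈ A := by
    have hx' : x ∈ A ++ B := by rw [hAB]; exact hxs
    rcases List.mem_append.mp hx' with hxa | hxb
    · exact hxa
    · have := hBone x hxb; omega
  have hAne : A ≠ [] := fun e => by rw [e] at hxA; simp at hxA
  set a := A.getLast hAne with ha
  have haA : a ∈ A := List.getLast_mem hAne
  have ha2 : 2 ≤ a := by
    have := List.mem_takeWhile_imp haA
    simpa using this
  set D := A.dropLast with hD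
  have hDa : D ++ [a] = A := List.dropLast_append_getLast hAne
  have hsdecomp : partsList l = D ++ a :: B := by
    rw [← hAB, ← hDa]; simp
  set p := D.length with hp
  have hApos : ∀ y ∈ A, 2 ≤ y := fun y hy => by
    have := List.mem_takeWhile_imp hy; simpa using this
  have hAsorted : A.Pairwise (· ≥ ·) :=
    List.Pairwise.sublist (List.takeWhile_sublist _) hssort
  have hDA : ∀ y ∈ D, y ∈ A := fun y hy => (List.dropLast_sublist A).mem hy
  -- every element of D is ≥ a
  have hDge : ∀ y ∈ D, a ≤ y := by
    have hAs := hAsorted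
    rw [← hDa] at hAs
    intro y hy
    exact (List.pairwise_append.mp hAs).2.2 y hy a (by simp)
  -- lengths and sums
  have hLpb : L = p + 1 + B.length := by
    rw [← hslen, hsdecomp]; simp [hp]; omega
  have hsum_decomp : D.sum + a + B.sum = n := by
    rw [← hssum, hsdecomp]; simp; omega
  have hBsum : B.sum = B.length := by
    have : B = List.replicate B.length 1 := List.eq_replicate_iff.mpr ⟨rfl, hBone⟩
    conv_lhs => rw [this]
    simp
  -- the new list
  set newl := D ++ (a - 1) :: (B ++ [1]) with hnewl
  have hnewlen : newl.length = L + 1 := by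
    rw [hnewl]; simp; omega
  have hnewsum : newl.sum = n := by
    rw [hnewl]; simp; omega
  have hnewpos : ∀ y ∈ newl, 0 < y := by
    intro y hy
    rw [hnewl] at hy
    rcases List.mem_append.mp hy with hyD | hy2
    · have := hApos y (hDA y hyD); omega
    · rcases List.mem_cons.mp hy2 with rfl | hy3
      · omega
      · rcases List.mem_append.mp hy3 with hyB | hy4
        · have := hBone y hyB; omega
        · simp at hy4; omega
  have hnewsort : newl.Pairwise (· ≥ ·) := by
    rw [hnewl]
    rw [List.pairwise_append]
    refine ⟨List.Pairwise.sublist (List.dropLast_sublist A) hAsorted, ?_, ?_⟩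
    · rw [List.pairwise_cons]
      constructor
      · intro y hy
        rcases List.mem_append.mp hy with hyB | hy1
        · have := hBone y hyB; omega
        · simp at hy1; omega
      · rw [List.pairwise_append]
        refine ⟨hBsorted, by simp, ?_⟩
        intro y hy z hz
        simp at hz
        subst hz
        have := hBone y hy; omega
    · intro y hy z hz
      have hya := hDge y hy
      rcases List.mem_cons.mp hz with rfl | hz2
      · omega
      · rcases List.mem_append.mp hz2 with hzB | hz1
        · have := hBone z hzB; omega
        · simp at hz1; omega
  -- the intermediate partition
  set ν := ofList n newl hnewpos hnewsum with hν
  have hνlist : partsList ν = newl := partsList_ofList n newl hnewpos hnewsum hnewsort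
  have hνlen : plen ν = L + 1 := by
    rw [← partsList_length, hνlist, hnewlen]
  -- partial sum formulas
  have hpsl : ∀ j, psum l j =
      if j ≤ p then (D.take j).sum else D.sum + a + min (j - p - 1) B.length := by
    intro j
    rw [psum_eq, hsdecomp, take_sum_mid D a B hBone j]
  have hpsν : ∀ j, psum ν j =
      if j ≤ p then (D.take j).sum
      else D.sum + (a - 1) + min (j - p - 1) (B.length + 1) := by
    intro j
    rw [psum_eq, hνlist, hnewl,
      take_sum_mid D (a - 1) (B ++ [1]) ?_ j]
    · simp [hp]
    · intro b hb
      rcases List.mem_append.mp hb with hbB | hb1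
      · exact hBone b hbB
      · simpa using hb1
  -- Dominates l ν
  have hdom1 : Dominates l ν := by
    intro j
    rw [hpsl j, hpsν j]
    by_cases hj : j ≤ p
    · simp [hj]
    · rw [if_neg hj, if_neg hj]
      rcases Nat.le_total (j - p - 1) B.length with hr | hr
      · rw [Nat.min_eq_left hr, Nat.min_eq_left (by omega)]
        omega
      · rw [Nat.min_eq_right hr]
        have : min (j - p - 1) (B.length + 1) ≤ B.length + 1 := Nat.min_le_right _ _
        omega
  have hne1 : l ≠ ν := by
    intro e
    rw [e] at hL
    omega
  -- Dominates ν m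
  have hdom2 : Dominates ν m := by
    intro j
    rw [hpsν j]
    by_cases hj : j ≤ p
    · rw [if_pos hj]
      have := hdom j
      rw [hpsl j, if_pos hj] at this
      exact this
    · rw [if_neg hj]
      push_neg at hj
      by_cases hjL : j ≤ L
      · -- here min (j-p-1) (B.length+1) = j-p-1
        have hr : j - p - 1 ≤ B.length := by omega
        rw [Nat.min_eq_left (by omega)]
        -- need psum m j < psum l j
        by_contra hcon2
        push_neg at hcon2
        have hub := hdom j
        rw [hpsl j, if_neg (by omega), Nat.min_eq_left hr] at hub
        have hmk : psum m j + (k - j) ≤ n := psum_add_le m (by omega)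
        omega
      · rw [Nat.min_eq_right (by omega)]
        have := psum_le m j
        omega
  have hne2 : ν ≠ m := by
    intro e
    rw [e] at hνlen
    omega
  exact h.2 ⟨ν, ⟨hdom1, hne1⟩, ⟨hdom2, hne2⟩⟩
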